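/- Let R be an equivalence relation on a set U and X ⊆ U. The collection τ_R = {U, ∅, R_*(X), R^*(X), B_R(X)} is a topology on U: it contains ∅ and U, and is closed under arbitrary unions and finite intersections of its members. -/
import Mathlib


variable {α : Type*}

/-- Lower approximation: points whose equivalence class is contained in `X`. -/
def lowerApprox (R : α → α → Prop) (X : Set α) : Set α := {x | ∀ y, R x y → y ∈ X}

/-- Upper approximation: points whose equivalence class meets `X`. -/
def upperApprox (R : α → α → Prop) (X : Set α) : Set α := {x | ∃ y, R x y ∧ y ∈ X}

/-- Boundary region. -/
def roughBoundary (R : α → α → Prop) (X : Set α) : Set α := upperApprox R X \ lowerApprox R X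

/-- The rough topology as a collection of sets. -/
def roughTau (R : α → α → Prop) (X : Set α) : Set (Set α) :=
  {Set.univ, ∅, lowerApprox R X, upperApprox R X, roughBoundary R X}

theorem roughTau_isTopology
    (R : α → α → Prop) (hR : Equivalence R) (X : Set α) :
    (∅ : Set α) ∈ roughTau R X ∧ (Set.univ : Set α) ∈ roughTau R X ∧
    (∀ S ⊆ roughTau R X, ⋃₀ S ∈ roughTau R X) ∧
    (∀ A ∈ roughTau R X, ∀ B ∈ roughTau R X, A ∩ B ∈ roughTau R X) := by
  have hls : lowerApprox R X ⊆ upperApprox R X := fun x hx =>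
    ⟨x, hR.refl x, hx x (hR.refl x)⟩
  have hbs : roughBoundary R X ⊆ upperApprox R X := fun x hx => hx.1
  have hlub : lowerApprox R X ∪ roughBoundary R X = upperApprox R X := by
    ext x
    constructor
    · rintro (h | h)
      · exact hls h
      · exact h.1
    · intro h
      by_cases hl : x ∈ lowerApprox R X
      · exact Or.inl hl
      · exact Or.inr ⟨h, hl⟩
  have h1 : lowerApprox R X ∩ upperApprox R X = lowerApprox R X :=
    Set.inter_eq_left.mpr hls
  have h2 : lowerApprox R X ∩ roughBoundary R X = ∅ := by
    ext x; simp only [Set.mem_inter_iff, Set.mem_empty_iff_false, iff_false]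
    rintro ⟨hl, hb⟩; exact hb.2 hl
  have h3 : upperApprox R X ∩ roughBoundary R X = roughBoundary R X :=
    Set.inter_eq_right.mpr hbs
  refine ⟨by simp [roughTau], by simp [roughTau], ?_, ?_⟩
  · intro S hS
    by_cases hu : (Set.univ : Set α) ∈ S
    · have he : ⋃₀ S = Set.univ :=
        Set.eq_univ_of_univ_subset (Set.subset_sUnion_of_mem hu)
      rw [he]; simp [roughTau]
    · by_cases hup : upperApprox R X ∈ S
      · have he : ⋃₀ S = upperApprox R X := by
          apply subset_antisymm
          · rintro x ⟨t, htS, hxt⟩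
            rcases hS htS with rfl | rfl | rfl | rfl | rfl
            · exact absurd htS hu
            · exact absurd hxt (Set.notMem_empty x)
            · exact hls hxt
            · exact hxt
            · exact hbs hxt
          · exact Set.subset_sUnion_of_mem hup
        rw [he]; simp [roughTau]
      · by_cases hl : lowerApprox R X ∈ S
        · by_cases hb : roughBoundary R X ∈ S
          · have he : ⋃₀ S = upperApprox R X := by
              apply subset_antisymm
              · rintro x ⟨t, htS, hxt⟩
                rcases hS htS with rfl | rfl | rfl | rfl | rfl
                · exact absurd htS hu
                · exact absurd hxt (Set.notMem_empty x)
                · exact hls hxt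
                · exact absurd htS hup
                · exact hbs hxt
              · rw [← hlub]
                exact Set.union_subset (Set.subset_sUnion_of_mem hl)
                  (Set.subset_sUnion_of_mem hb)
            rw [he]; simp [roughTau]
          · have he : ⋃₀ S = lowerApprox R X := by
              apply subset_antisymm
              · rintro x ⟨t, htS, hxt⟩
                rcases hS htS with rfl | rfl | rfl | rfl | rfl
                · exact absurd htS hu
                · exact absurd hxt (Set.notMem_empty x)
                · exact hxt
                · exact absurd htS hup
                · exact absurd htS hb
              · exact Set.subset_sUnion_of_mem hl
            rw [he]; simp [roughTau]
        · by_cases hb : roughBoundary R X ∈ S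
          · have he : ⋃₀ S = roughBoundary R X := by
              apply subset_antisymm
              · rintro x ⟨t, htS, hxt⟩
                rcases hS htS with rfl | rfl | rfl | rfl | rfl
                · exact absurd htS hu
                · exact absurd hxt (Set.notMem_empty x)
                · exact absurd htS hl
                · exact absurd htS hup
                · exact hxt
              · exact Set.subset_sUnion_of_mem hb
            rw [he]; simp [roughTau]
          · have he : ⋃₀ S = (∅ : Set α) := by
              apply Set.eq_empty_of_subset_empty
              rintro x ⟨t, htS, hxt⟩
              rcases hS htS with rfl | rfl | rfl | rfl | rfl
              · exact absurd htS hu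
              · exact hxt
              · exact absurd htS hl
              · exact absurd htS hup
              · exact absurd htS hb
            rw [he]; simp [roughTau]
  · intro A hA B hB
    have h1' : upperApprox R X ∩ lowerApprox R X = lowerApprox R X := by
      rw [Set.inter_comm]; exact h1
    have h2' : roughBoundary R X ∩ lowerApprox R X = ∅ := by
      rw [Set.inter_comm]; exact h2
    have h3' : roughBoundary R X ∩ upperApprox R X = roughBoundary R X := by
      rw [Set.inter_comm]; exact h3
    rcases hA with rfl | rfl | rfl | rfl | rfl <;>
      rcases hB with rfl | rfl | rfl | rfl | rfl <;>
      simp only [Set.univ_inter, Set.inter_univ, Set.empty_inter, Set.inter_empty,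
        Set.inter_self, h1, h1', h2, h2', h3, h3'] <;>
      simp [roughTau]
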